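/- Let R be a commutative ring, let (Cⁿ)_{n∈ℤ} and (Dⁿ)_{n∈ℤ} be cochain complexes of R-modules with differentials d_C and d_D, and let f : C → D be a morphism of cochain complexes (a family of R-linear maps fⁿ : Cⁿ → Dⁿ commuting with the differentials). Fix q ∈ ℤ and assume: (i) f^{q−2} : C^{q−2} → D^{q−2} is surjective; (ii) the induced map on q-th cohomology H^q(C) → H^q(D) is injective; (iii) the induced map on (q−1)-th cohomology H^{q−1}(C) → H^{q−1}(D) is surjective. Then for every α ∈ C^q with d_C α = 0 and f^q(α) = 0, there exists β ∈ C^{q−1} with f^{q−1}(β) = 0 and d_C β = α. -/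

import Mathlib

open CategoryTheory HomologicalComplex

open CategoryTheory HomologicalComplex

namespace CategoryTheory.ShortComplex

variable {R : Type} [CommRing R]

/-- Element-level homology class constructor. -/
noncomputable def mcHomologyMk (S : ShortComplex (ModuleCat R)) (x : S.X₂) (hx : S.g x = 0) :
    S.homology :=
  S.homologyπ (S.moduleCatCyclesIso.inv ⟨x, hx⟩)

lemma mcHomologyMk_eq_zero_iff (S : ShortComplex (ModuleCat R)) (x : S.X₂) (hx : S.g x = 0) :
    S.mcHomologyMk x hx = 0 ↔ ∃ y : S.X₁, S.f y = x := by
  rw [mcHomologyMk]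
  erw [S.moduleCatCyclesIso_inv_π_apply ⟨x, hx⟩]
  have hinj : Function.Injective S.moduleCatHomologyIso.inv :=
    (ModuleCat.mono_iff_injective S.moduleCatHomologyIso.inv).1 inferInstance
  have hπ : S.moduleCatLeftHomologyData.π (⟨x, hx⟩ : LinearMap.ker S.g.hom) = 0 ↔
      ∃ y, S.moduleCatToCycles y = (⟨x, hx⟩ : LinearMap.ker S.g.hom) := by
    rw [show S.moduleCatLeftHomologyData.π (⟨x, hx⟩ : LinearMap.ker S.g.hom) =
      Submodule.Quotient.mk (⟨x, hx⟩ : LinearMap.ker S.g.hom) from rfl]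
    exact (Submodule.Quotient.mk_eq_zero (LinearMap.range S.moduleCatToCycles)).trans
      LinearMap.mem_range
  constructor
  · intro h
    obtain ⟨y, hy⟩ := hπ.1 (hinj (by rw [map_zero]; exact h))
    exact ⟨y, congrArg Subtype.val hy⟩
  · rintro ⟨y, hy⟩
    erw [hπ.2 ⟨y, Subtype.ext hy⟩]; rw [map_zero]

lemma mcHomologyMk_surjective (S : ShortComplex (ModuleCat R)) (h : S.homology) :
    ∃ (x : S.X₂) (hx : S.g x = 0), S.mcHomologyMk x hx = h := by
  obtain ⟨c, hc⟩ := (ModuleCat.epi_iff_surjective S.homologyπ).1 inferInstance h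
  refine ⟨(S.moduleCatCyclesIso.hom c).1, (S.moduleCatCyclesIso.hom c).2, ?_⟩
  unfold mcHomologyMk; rw [
    show ((⟨(S.moduleCatCyclesIso.hom c).1, (S.moduleCatCyclesIso.hom c).2⟩ :
      LinearMap.ker S.g.hom)) = S.moduleCatCyclesIso.hom c from rfl]
  erw [S.moduleCatCyclesIso.hom_inv_id_apply c]
  exact hc

lemma homologyMap_mcHomologyMk {S T : ShortComplex (ModuleCat R)} (φ : S ⟶ T)
    (x : S.X₂) (hx : S.g x = 0) (hx' : T.g (φ.τ₂ x) = 0) :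
    homologyMap φ (S.mcHomologyMk x hx) = T.mcHomologyMk (φ.τ₂ x) hx' := by
  rw [mcHomologyMk, mcHomologyMk]
  have h₂ := ConcreteCategory.congr_hom (homologyπ_naturality φ) (S.moduleCatCyclesIso.inv ⟨x, hx⟩)
  simp only [ConcreteCategory.comp_apply] at h₂
  rw [h₂]
  congr 1
  apply (ModuleCat.mono_iff_injective T.iCycles).1 inferInstance
  erw [T.moduleCatCyclesIso_inv_iCycles_apply ⟨φ.τ₂ x, hx'⟩]
  have h₄ := ConcreteCategory.congr_hom (cyclesMap_i φ) (S.moduleCatCyclesIso.inv ⟨x, hx⟩)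
  simp only [ConcreteCategory.comp_apply] at h₄
  erw [h₄, S.moduleCatCyclesIso_inv_iCycles_apply ⟨x, hx⟩]
  rfl

lemma mcHomologyMk_sub (S : ShortComplex (ModuleCat R)) (x y : S.X₂)
    (hx : S.g x = 0) (hy : S.g y = 0) (hxy : S.g (x - y) = 0) :
    S.mcHomologyMk x hx - S.mcHomologyMk y hy = S.mcHomologyMk (x - y) hxy := by
  simp only [mcHomologyMk, ← map_sub]
  congr 1
  exact (map_sub S.moduleCatCyclesIso.inv.hom _ _).symm

/-- Injectivity on homology, element form. -/
lemma injective_homologyMap_elem {S T : ShortComplex (ModuleCat R)} (φ : S ⟶ T)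
    (hinj : Function.Injective (homologyMap φ)) (x : S.X₂) (hx : S.g x = 0)
    (hw : ∃ w : T.X₁, T.f w = φ.τ₂ x) : ∃ y : S.X₁, S.f y = x := by
  rw [← S.mcHomologyMk_eq_zero_iff x hx]
  apply hinj
  rw [map_zero, homologyMap_mcHomologyMk φ x hx (by
    obtain ⟨w, hw⟩ := hw
    rw [← hw]
    exact T.moduleCat_zero_apply w)]
  rw [T.mcHomologyMk_eq_zero_iff]
  exact hw

/-- Surjectivity on homology, element form. -/
lemma surjective_homologyMap_elem {S T : ShortComplex (ModuleCat R)} (φ : S ⟶ T)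
    (hsur : Function.Surjective (homologyMap φ)) (z : T.X₂) (hz : T.g z = 0) :
    ∃ (x : S.X₂) (_ : S.g x = 0) (w : T.X₁), φ.τ₂ x = z + T.f w := by
  obtain ⟨h, hh⟩ := hsur (T.mcHomologyMk z hz)
  obtain ⟨x, hx, rfl⟩ := S.mcHomologyMk_surjective h
  have hτx : T.g (φ.τ₂ x) = 0 := by
    have hc := ConcreteCategory.congr_hom φ.comm₂₃ x
    simp only [ConcreteCategory.comp_apply] at hc
    rw [hc, hx, map_zero]
  rw [homologyMap_mcHomologyMk φ x hx hτx] at hh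
  have h0 : T.mcHomologyMk (φ.τ₂ x - z) (by rw [map_sub, hτx, hz, sub_zero]) = 0 := by
    rw [← T.mcHomologyMk_sub _ _ hτx hz, hh, sub_self]
  rw [T.mcHomologyMk_eq_zero_iff] at h0
  obtain ⟨w, hw⟩ := h0
  exact ⟨x, hx, w, by rw [hw]; abel⟩

end CategoryTheory.ShortComplex


/-- If `f : C ⟶ D` is a morphism of cochain complexes of `R`-modules which is surjective
in degree `q - 2`, injective on `q`-th cohomology and surjective on `(q-1)`-th cohomology,
then every `q`-cocycle of `C` killed by `f` is the coboundary of a `(q-1)`-cochain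
killed by `f`. -/
theorem exists_coboundary_vanishing {R : Type} [CommRing R]
    (C D : CochainComplex (ModuleCat R) ℤ) (f : C ⟶ D) (q : ℤ)
    (h1 : Function.Surjective ⇑(f.f (q - 2)))
    (h2 : Function.Injective ⇑(homologyMap f q))
    (h3 : Function.Surjective ⇑(homologyMap f (q - 1)))
    (α : C.X q) (hα : C.d q (q + 1) α = 0) (hfα : f.f q α = 0) :
    ∃ β : C.X (q - 1), f.f (q - 1) β = 0 ∧ C.d (q - 1) q β = α := by
  have hp : (ComplexShape.up ℤ).prev q = q - 1 := CochainComplex.prev ℤ q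
  have hn' : (ComplexShape.up ℤ).next (q - 1) = q := by
    rw [CochainComplex.next]; omega
  have hp' : (ComplexShape.up ℤ).prev (q - 1) = q - 2 := by
    rw [CochainComplex.prev]; omega
  set φ := (shortComplexFunctor (ModuleCat R) (ComplexShape.up ℤ) q).map f with hφ
  set φ' := (shortComplexFunctor (ModuleCat R) (ComplexShape.up ℤ) (q - 1)).map f with hφ'
  -- Step 1: α is a coboundary in C
  have hgα : (C.sc q).g α = 0 := by
    show C.d q ((ComplexShape.up ℤ).next q) α = 0
    rw [CochainComplex.next]
    exact hα
  obtain ⟨y, hy⟩ := ShortComplex.injective_homologyMap_elem φ h2 α hgα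
    ⟨0, by rw [map_zero]; exact hfα.symm⟩
  set γ : C.X (q - 1) := (C.XIsoOfEq hp).hom y with hγdef
  have hγ : C.d (q - 1) q γ = α := by
    have h := ConcreteCategory.congr_hom (C.XIsoOfEq_hom_comp_d hp q) y
    erw [ConcreteCategory.comp_apply] at h
    rw [hγdef, h]; exact hy
  -- Step 2: f.f (q-1) γ is a cocycle in D
  have hz : (D.sc (q - 1)).g (f.f (q - 1) γ) = 0 := by
    show D.d (q - 1) ((ComplexShape.up ℤ).next (q - 1)) (f.f (q - 1) γ) = 0
    rw [hn']
    have h := ConcreteCategory.congr_hom (f.comm (q - 1) q) γ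
    simp only [ConcreteCategory.comp_apply] at h
    rw [h, hγ]
    exact hfα
  obtain ⟨x, hx, w, hw⟩ := ShortComplex.surjective_homologyMap_elem φ' h3 (f.f (q - 1) γ) hz
  let x' : C.X (q - 1) := x
  let u : D.X (q - 1) := (D.sc (q - 1)).f w
  have hwφ : f.f (q - 1) x' = f.f (q - 1) γ + u := hw
  have hx' : C.d (q - 1) q x' = 0 := by
    have h := ConcreteCategory.congr_hom (C.d_comp_XIsoOfEq_hom hn' (q - 1)) x'
    simp only [ConcreteCategory.comp_apply] at h
    rw [← h, show C.d (q - 1) ((ComplexShape.up ℤ).next (q - 1)) x' = (C.sc (q - 1)).g x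
      from rfl, hx]; exact map_zero _
  set w' : D.X (q - 2) := (D.XIsoOfEq hp').hom w with hw'def
  have hww : D.d (q - 2) (q - 1) w' = u := by
    have h := ConcreteCategory.congr_hom (D.XIsoOfEq_hom_comp_d hp' (q - 1)) w
    erw [ConcreteCategory.comp_apply] at h
    exact h
  obtain ⟨ζ, hζ⟩ := h1 w'
  refine ⟨γ - x' + C.d (q - 2) (q - 1) ζ, ?_, ?_⟩
  · have hc := ConcreteCategory.congr_hom (f.comm (q - 2) (q - 1)) ζ
    simp only [ConcreteCategory.comp_apply] at hc
    rw [map_add, map_sub, ← hc, hζ, hww, hwφ]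
    abel
  · have hdd := ConcreteCategory.congr_hom (C.d_comp_d (q - 2) (q - 1) q) ζ
    simp only [ConcreteCategory.comp_apply, LinearMap.zero_apply,
      Limits.zero_comp] at hdd
    rw [map_add, map_sub, hγ, hx', hdd]
    show α - 0 + (0 : C.X (q - 2) →ₗ[R] C.X q) ζ = α
    simp
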